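/- arXiv:2009.00843 — 4 statements merged into one kernel-verified Lean document; each statement's English description precedes it below -/
import Mathlib

section
/- Let G be a subcubic planar graph and let I be an independent set of G. Then the subgraph of the exact square G^{[#2]} induced by I is planar. -/
/-- The exact square of a graph `G`: two distinct vertices are adjacent iff
their distance in `G` is exactly `2`. -/
def exactSquare {V : Type*} (G : SimpleGraph V) : SimpleGraph V where
  Adj u v := G.dist u v = 2
  symm := by constructor; intro u v h; rwa [SimpleGraph.dist_comm]
  loopless := by constructor; intro v h; simp [SimpleGraph.dist_self] at h

/-- `G` has `H` as a minor: there is a family of nonempty, pairwise disjoint,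
connected branch sets in `G`, one for each vertex of `H`, such that every edge
of `H` is realized by an edge of `G` between the corresponding branch sets. -/
def HasMinor {V W : Type*} (G : SimpleGraph V) (H : SimpleGraph W) : Prop :=
  ∃ B : W → Set V,
    (∀ w, (B w).Nonempty) ∧
    (∀ w, (G.induce (B w)).Connected) ∧
    (Pairwise fun w w' => Disjoint (B w) (B w')) ∧
    ∀ ⦃w w'⦄, H.Adj w w' → ∃ u ∈ B w, ∃ v ∈ B w', G.Adj u v

/-- Planarity, via Wagner's theorem: a graph is planar iff it has neither a
`K₅` minor nor a `K₃,₃` minor. -/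
def IsPlanar {V : Type*} (G : SimpleGraph V) : Prop :=
  ¬ HasMinor G (SimpleGraph.completeGraph (Fin 5)) ∧
    ¬ HasMinor G (completeBipartiteGraph (Fin 3) (Fin 3))

open Set SimpleGraph

section Aux

variable {V W : Type*}

lemma hasMinor_mono {G G' : SimpleGraph V} {K : SimpleGraph W} (hle : G ≤ G')
    (h : HasMinor G K) : HasMinor G' K := by
  obtain ⟨B, h1, h2, h3, h4⟩ := h
  refine ⟨B, h1, fun s => (h2 s).mono (fun a b hab => hle hab), h3, fun p q hpq => ?_⟩
  obtain ⟨u, hu, v, hv, huv⟩ := h4 hpq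
  exact ⟨u, hu, v, hv, hle huv⟩

lemma hasMinor_of_induce {G : SimpleGraph V} {A : Set V} {H : SimpleGraph ↥A}
    {K : SimpleGraph W}
    (hadj : ∀ a b : ↥A, H.Adj a b → G.Adj ↑a ↑b)
    (h : HasMinor H K) : HasMinor G K := by
  obtain ⟨B, h1, h2, h3, h4⟩ := h
  refine ⟨fun s => Subtype.val '' B s, fun s => (h1 s).image _, fun s => ?_, ?_, ?_⟩
  · let f : (H.induce (B s)) →g (G.induce (Subtype.val '' B s)) :=
      { toFun := fun x => ⟨(x : ↥A), ⟨(x : ↥A), x.2, rfl⟩⟩,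
        map_rel' := fun {x y} hxy => hadj _ _ hxy }
    refine SimpleGraph.Connected.map f ?_ (h2 s)
    rintro ⟨v, a, ha, rfl⟩
    exact ⟨⟨a, ha⟩, rfl⟩
  · intro s s' hss'
    exact Set.disjoint_image_of_injective Subtype.val_injective (h3 hss')
  · intro p q hpq
    obtain ⟨u, hu, v, hv, huv⟩ := h4 hpq
    exact ⟨↑u, ⟨u, hu, rfl⟩, ↑v, ⟨v, hv, rfl⟩, hadj _ _ huv⟩

lemma isPlanar_anti {G G' : SimpleGraph V} (hle : G ≤ G') (h : IsPlanar G') : IsPlanar G :=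
  ⟨fun hm => h.1 (hasMinor_mono hle hm), fun hm => h.2 (hasMinor_mono hle hm)⟩

end Aux
section YDelta

variable {V W : Type*}

/-- The graph obtained from `G` by isolating `w` and adding a clique on its neighborhood. -/
def Tw (G : SimpleGraph V) (w : V) : SimpleGraph V where
  Adj u v := u ≠ v ∧ u ≠ w ∧ v ≠ w ∧ (G.Adj u v ∨ (G.Adj w u ∧ G.Adj w v))
  symm := by
    constructor
    rintro u v ⟨h1, h2, h3, h4 | ⟨h4, h5⟩⟩
    · exact ⟨h1.symm, h3, h2, Or.inl h4.symm⟩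
    · exact ⟨h1.symm, h3, h2, Or.inr ⟨h5, h4⟩⟩
  loopless := by constructor; rintro v ⟨h1, -⟩; exact h1 rfl

lemma singleton_induce_connected (G : SimpleGraph V) (w : V) :
    (G.induce ({w} : Set V)).Connected := by
  haveI : Nonempty ↥({w} : Set V) := ⟨⟨w, rfl⟩⟩
  have hpre : (G.induce ({w} : Set V)).Preconnected := by
    intro a b
    have : a = b := Subtype.ext (a.2.trans b.2.symm)
    exact this ▸ Reachable.refl _
  exact ⟨hpre⟩

lemma conn_insert (G : SimpleGraph V) (w : V) (B : Set V) (hw : w ∉ B)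
    (hc : ((Tw G w).induce B).Connected) (hx : ∃ x ∈ B, G.Adj w x) :
    (G.induce (insert w B)).Connected := by
  obtain ⟨x, hxB, hwx⟩ := hx
  have hBsub : B ⊆ insert w B := Set.subset_insert _ _
  have key : ∀ (u v : ↥B) (p : ((Tw G w).induce B).Walk u v),
      (G.induce (insert w B)).Reachable ⟨↑u, hBsub u.2⟩ ⟨↑v, hBsub v.2⟩ := by
    intro u v p
    induction p with
    | nil => exact Reachable.refl _
    | @cons a b c h p ih =>
      have h' : (Tw G w).Adj ↑a ↑b := h
      rcases h'.2.2.2 with hg | ⟨hg1, hg2⟩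
      · exact (Reachable.trans (SimpleGraph.Adj.reachable (by exact hg :
          (G.induce (insert w B)).Adj ⟨↑a, hBsub a.2⟩ ⟨↑b, hBsub b.2⟩)) ih)
      · have r1 : (G.induce (insert w B)).Adj ⟨↑a, hBsub a.2⟩ ⟨w, Set.mem_insert _ _⟩ := hg1.symm
        have r2 : (G.induce (insert w B)).Adj ⟨w, Set.mem_insert _ _⟩ ⟨↑b, hBsub b.2⟩ := hg2
        exact (r1.reachable.trans r2.reachable).trans ih
  have reachB : ∀ (a b : V) (ha : a ∈ B) (hb : b ∈ B),
      (G.induce (insert w B)).Reachable ⟨a, hBsub ha⟩ ⟨b, hBsub hb⟩ := by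
    intro a b ha hb
    obtain ⟨p⟩ := hc.preconnected ⟨a, ha⟩ ⟨b, hb⟩
    exact key _ _ p
  have rwx : (G.induce (insert w B)).Reachable ⟨w, Set.mem_insert _ _⟩ ⟨x, hBsub hxB⟩ :=
    SimpleGraph.Adj.reachable (by exact hwx)
  haveI : Nonempty ↥(insert w B) := ⟨⟨w, Set.mem_insert _ _⟩⟩
  refine ⟨fun a b => ?_⟩
  obtain ⟨a, ha⟩ := a
  obtain ⟨b, hb⟩ := b
  rcases ha with rfl | ha'
  · rcases hb with rfl | hb'
    · exact Reachable.refl _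
    · exact rwx.trans (reachB _ _ hxB hb')
  · rcases hb with rfl | hb'
    · exact ((rwx.trans (reachB _ _ hxB ha')).symm)
    · exact reachB _ _ ha' hb'

lemma four_distinct {s : Set V} (hfin : s.Finite) (h : s.ncard ≤ 3) {a b c d : V}
    (ha : a ∈ s) (hb : b ∈ s) (hc : c ∈ s) (hd : d ∈ s)
    (hab : a ≠ b) (hac : a ≠ c) (had : a ≠ d) (hbc : b ≠ c) (hbd : b ≠ d) (hcd : c ≠ d) :
    False := by
  have hsub : ({a, b, c, d} : Set V) ⊆ s := by
    intro x hx
    rcases hx with rfl | rfl | rfl | rfl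
    · exact ha
    · exact hb
    · exact hc
    · exact hd
  have h4 : ({a, b, c, d} : Set V).ncard = 4 := by
    rw [Set.ncard_insert_of_notMem (by simp [hab, hac, had]) (Set.toFinite _),
      Set.ncard_insert_of_notMem (by simp [hbc, hbd]) (Set.toFinite _),
      Set.ncard_insert_of_notMem (by simp [hcd]) (Set.toFinite _), Set.ncard_singleton]
  have := Set.ncard_le_ncard hsub hfin
  omega

end YDelta
section Place

variable {V W : Type*}

lemma place {G : SimpleGraph V} {w : V} [DecidableEq W] {K : SimpleGraph W}
    {B : W → Set V} (t : W)
    (hne : ∀ s, (B s).Nonempty)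
    (hw : ∀ s, w ∉ B s)
    (hdisj : Pairwise fun s s' => Disjoint (B s) (B s'))
    (hconnT : ∀ s, ((Tw G w).induce (B s)).Connected)
    (hother : ∀ s, s ≠ t → ∀ a b : V, a ∈ B s → b ∈ B s → (Tw G w).Adj a b → G.Adj a b)
    (ht : ∃ x ∈ B t, G.Adj w x)
    (hreal : ∀ ⦃p q⦄, K.Adj p q →
      (∃ u ∈ B p, ∃ v ∈ B q, G.Adj u v) ∨
      (p = t ∧ ∃ y ∈ B q, G.Adj w y) ∨ (q = t ∧ ∃ y ∈ B p, G.Adj w y)) :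
    HasMinor G K := by
  have hsub : ∀ s, B s ⊆ (if s = t then insert w (B t) else B s) := by
    intro s
    by_cases h : s = t
    · subst h; simp [Set.subset_insert]
    · simp [h]
  refine ⟨fun s => if s = t then insert w (B t) else B s, ?_, ?_, ?_, ?_⟩
  · intro s
    exact (hne s).mono (hsub s)
  · intro s
    beta_reduce
    by_cases h : s = t
    · rw [if_pos h]
      exact h ▸ conn_insert G w (B t) (hw t) (hconnT t) ht
    · rw [if_neg h]
      exact (hconnT s).mono (fun a b hab => hother s h _ _ a.2 b.2 hab)
  · intro s s' hss'
    beta_reduce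
    by_cases h : s = t
    · subst h
      rw [if_pos rfl, if_neg (Ne.symm hss')]
      refine Set.disjoint_left.mpr ?_
      intro x hxm hx'
      rcases Set.mem_insert_iff.mp hxm with rfl | hx
      · exact hw s' hx'
      · exact Set.disjoint_left.mp (hdisj hss') hx hx' 
    · by_cases h' : s' = t
      · subst h'
        rw [if_neg h, if_pos rfl]
        refine Set.disjoint_right.mpr ?_
        intro x hxm hx'
        rcases Set.mem_insert_iff.mp hxm with rfl | hx
        · exact hw s hx'
        · exact Set.disjoint_left.mp (hdisj hss') hx' hx
      · simp only [if_neg h, if_neg h']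
        exact hdisj hss'
  · intro p q hpq
    have hpq' : p ≠ q := hpq.ne
    rcases hreal hpq with ⟨u, hu, v, hv, huv⟩ | ⟨rfl, y, hy, hwy⟩ | ⟨rfl, y, hy, hwy⟩
    · exact ⟨u, hsub p hu, v, hsub q hv, huv⟩
    · refine ⟨w, ?_, y, hsub q hy, hwy⟩
      simp
    · refine ⟨y, hsub p hy, w, ?_, hwy.symm⟩
      simp

end Place
section Key

variable {V W : Type*}

lemma key [Fintype V] [DecidableEq W] (K : SimpleGraph W) (G : SimpleGraph V) (w : V)
    (h3 : (G.neighborSet w).ncard ≤ 3)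
    (hKdeg : ∀ t : W, ∃ s, K.Adj t s)
    (hm : HasMinor (Tw G w) K) :
    HasMinor G K ∨
    ∃ (i j k : W) (B : W → Set V),
      i ≠ j ∧ i ≠ k ∧ j ≠ k ∧ K.Adj i j ∧ K.Adj i k ∧ K.Adj j k ∧
      (∀ s, (B s).Nonempty) ∧ (∀ s, (G.induce (B s)).Connected) ∧
      (Pairwise fun s s' => Disjoint (B s) (B s')) ∧
      (∀ ⦃p q⦄, K.Adj p q →
        (p ∈ ({i, j, k} : Set W) ∧ q ∈ ({i, j, k} : Set W)) ∨
        ∃ u ∈ B p, ∃ v ∈ B q, G.Adj u v) ∧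
      (∀ s, w ∉ B s) ∧
      (∀ t ∈ ({i, j, k} : Set W), ∃ x ∈ B t, G.Adj w x) := by
  classical
  obtain ⟨B, hne, hconn, hdisj, hreal⟩ := hm
  -- w belongs to no branch set
  have hw : ∀ s, w ∉ B s := by
    intro s hws
    obtain ⟨s', hs'⟩ := hKdeg s
    obtain ⟨u, hu, v, hv, huv⟩ := hreal hs'
    obtain ⟨p⟩ := (hconn s).preconnected ⟨w, hws⟩ ⟨u, hu⟩
    cases p with
    | nil => exact huv.2.1 rfl
    | cons h q => exact h.2.1 rfl
  -- membership of branch sets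
  set Mm : W → Set V := fun s => B s ∩ G.neighborSet w with hMm
  have hdich : ∀ {a b : V}, (Tw G w).Adj a b →
      G.Adj a b ∨ (a ∈ G.neighborSet w ∧ b ∈ G.neighborSet w ∧ a ≠ b) := by
    rintro a b ⟨hab, -, -, h | ⟨h1, h2⟩⟩
    · exact Or.inl h
    · exact Or.inr ⟨h1, h2, hab⟩
  have hdistinct : ∀ {p q : W} {x y : V}, p ≠ q → x ∈ B p → y ∈ B q → x ≠ y := by
    intro p q x y hpq hx hy heq
    subst heq
    exact Set.disjoint_left.mp (hdisj hpq) hx hy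
  have hfinN : (G.neighborSet w).Finite := Set.toFinite _
  -- four-element contradictions
  have hA : ∀ {t p : W} {x y a b : V}, t ≠ p → x ∈ Mm t → y ∈ Mm t → x ≠ y →
      a ∈ Mm p → b ∈ Mm p → a ≠ b → False := by
    intro t p x y a b htp hx hy hxy ha hb hab
    exact four_distinct hfinN h3 hx.2 hy.2 ha.2 hb.2 hxy
      (hdistinct htp hx.1 ha.1) (hdistinct htp hx.1 hb.1)
      (hdistinct htp hy.1 ha.1) (hdistinct htp hy.1 hb.1) hab
  have hB : ∀ {t p q : W} {x y a b : V}, t ≠ p → t ≠ q → p ≠ q →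
      x ∈ Mm t → y ∈ Mm t → x ≠ y → a ∈ Mm p → b ∈ Mm q → False := by
    intro t p q x y a b htp htq hpq hx hy hxy ha hb
    exact four_distinct hfinN h3 hx.2 hy.2 ha.2 hb.2 hxy
      (hdistinct htp hx.1 ha.1) (hdistinct htq hx.1 hb.1)
      (hdistinct htp hy.1 ha.1) (hdistinct htq hy.1 hb.1)
      (hdistinct hpq ha.1 hb.1)
  have hC : ∀ {p q r s : W} {xp xq xr xs : V}, p ≠ q → p ≠ r → p ≠ s → q ≠ r → q ≠ s → r ≠ s →
      xp ∈ Mm p → xq ∈ Mm q → xr ∈ Mm r → xs ∈ Mm s → False := by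
    intro p q r s xp xq xr xs h1 h2 h4 h5 h6 h7 hp hq hr hs
    exact four_distinct hfinN h3 hp.2 hq.2 hr.2 hs.2
      (hdistinct h1 hp.1 hq.1) (hdistinct h2 hp.1 hr.1) (hdistinct h4 hp.1 hs.1)
      (hdistinct h5 hq.1 hr.1) (hdistinct h6 hq.1 hs.1) (hdistinct h7 hr.1 hs.1)
  by_cases h2 : ∃ t, ∃ x ∈ Mm t, ∃ y ∈ Mm t, x ≠ y
  · -- some branch set contains two neighbors of w : put w there
    obtain ⟨t, x, hx, y, hy, hxy⟩ := h2
    left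
    refine place t hne hw hdisj hconn ?_ ⟨x, hx.1, hx.2⟩ ?_
    · intro s hst a b ha hb hab
      rcases hdich hab with h | ⟨ha1, hb1, hne'⟩
      · exact h
      · exact (hA (Ne.symm hst) hx hy hxy ⟨ha, ha1⟩ ⟨hb, hb1⟩ hne').elim
    · intro p q hpq
      by_cases hg : ∃ u ∈ B p, ∃ v ∈ B q, G.Adj u v
      · exact Or.inl hg
      obtain ⟨u, hu, v, hv, huv⟩ := hreal hpq
      rcases hdich huv with h | ⟨h1, h2', _⟩
      · exact absurd ⟨u, hu, v, hv, h⟩ hg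
      have hpq' : p ≠ q := hpq.ne
      by_cases hp : p = t
      · exact Or.inr (Or.inl ⟨hp, v, hv, h2'⟩)
      by_cases hq : q = t
      · exact Or.inr (Or.inr ⟨hq, u, hu, h1⟩)
      · exact (hB (fun h => hp h.symm) (fun h => hq h.symm) hpq' hx hy hxy
          ⟨hu, h1⟩ ⟨hv, h2'⟩).elim
  · push_neg at h2
    -- every branch set contains at most one neighbor of w
    have hsingle : ∀ (s : W) (x y : V), x ∈ Mm s → y ∈ Mm s → x = y := by
      intro s x y hx hy
      by_contra hne'
      exact hne' (h2 s x hx y hy)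
    have hother : ∀ (s : W), ∀ a b : V, a ∈ B s → b ∈ B s → (Tw G w).Adj a b → G.Adj a b := by
      intro s a b ha hb hab
      rcases hdich hab with h | ⟨ha1, hb1, hne'⟩
      · exact h
      · exact absurd (hsingle s a b ⟨ha, ha1⟩ ⟨hb, hb1⟩) hne'
    have hconnG : ∀ s, (G.induce (B s)).Connected := by
      intro s
      exact (hconn s).mono (fun a b hab => hother s _ _ a.2 b.2 hab)
    set Bad : W → W → Prop := fun p q => K.Adj p q ∧ ¬∃ u ∈ B p, ∃ v ∈ B q, G.Adj u v
      with hBadDef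
    have hbadM : ∀ {p q : W}, Bad p q → ∃ u ∈ Mm p, ∃ v ∈ Mm q, True := by
      intro p q ⟨hpq, hg⟩
      obtain ⟨u, hu, v, hv, huv⟩ := hreal hpq
      rcases hdich huv with h | ⟨h1, h2', _⟩
      · exact absurd ⟨u, hu, v, hv, h⟩ hg
      · exact ⟨u, ⟨hu, h1⟩, v, ⟨hv, h2'⟩, trivial⟩
    have hbsymm : ∀ {p q : W}, Bad p q → Bad q p := by
      rintro p q ⟨h1, hg⟩
      exact ⟨h1.symm, fun ⟨u, hu, v, hv, huv⟩ => hg ⟨v, hv, u, hu, huv.symm⟩⟩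
    by_cases hbad : ∃ p q, Bad p q
    · obtain ⟨i, j, hbij⟩ := hbad
      have hij : i ≠ j := hbij.1.ne
      obtain ⟨xi, hxi, xj, hxj, -⟩ := hbadM hbij
      by_cases hi : ∀ p q, Bad p q → p = i ∨ q = i
      · left
        refine place i hne hw hdisj hconn (fun s _ => hother s) ⟨xi, hxi.1, hxi.2⟩ ?_
        intro p q hpq
        by_cases hg : ∃ u ∈ B p, ∃ v ∈ B q, G.Adj u v
        · exact Or.inl hg
        obtain ⟨u, hu, v, hv, -⟩ := hbadM ⟨hpq, hg⟩
        rcases hi p q ⟨hpq, hg⟩ with rfl | rfl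
        · exact Or.inr (Or.inl ⟨rfl, v, hv.1, hv.2⟩)
        · exact Or.inr (Or.inr ⟨rfl, u, hu.1, hu.2⟩)
      by_cases hj : ∀ p q, Bad p q → p = j ∨ q = j
      · left
        refine place j hne hw hdisj hconn (fun s _ => hother s) ⟨xj, hxj.1, hxj.2⟩ ?_
        intro p q hpq
        by_cases hg : ∃ u ∈ B p, ∃ v ∈ B q, G.Adj u v
        · exact Or.inl hg
        obtain ⟨u, hu, v, hv, -⟩ := hbadM ⟨hpq, hg⟩
        rcases hj p q ⟨hpq, hg⟩ with rfl | rfl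
        · exact Or.inr (Or.inl ⟨rfl, v, hv.1, hv.2⟩)
        · exact Or.inr (Or.inr ⟨rfl, u, hu.1, hu.2⟩)
      -- triangle case
      push_neg at hi hj
      obtain ⟨p, q, hbpq, hpi, hqi⟩ := hi
      obtain ⟨r, s, hbrs, hrj, hsj⟩ := hj
      obtain ⟨xp, hxp, xq, hxq, -⟩ := hbadM hbpq
      obtain ⟨xr, hxr, xs, hxs, -⟩ := hbadM hbrs
      have hpq' : p ≠ q := hbpq.1.ne
      have hrs' : r ≠ s := hbrs.1.ne
      -- find k1 with Bad j k1, k1 ∉ {i, j}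
      have hk1 : ∃ k1, Bad j k1 ∧ k1 ≠ i ∧ k1 ≠ j := by
        by_cases hpj : p = j
        · exact ⟨q, hpj ▸ hbpq, hqi, fun h => hpq' (hpj.trans h.symm)⟩
        · by_cases hqj : q = j
          · exact ⟨p, hbsymm (hqj ▸ hbpq), hpi, fun h => hpq' (h.trans hqj.symm)⟩
          · exact (hC hij (Ne.symm hpi) (Ne.symm hqi)
              (fun h => hpj h.symm) (fun h => hqj h.symm) hpq' hxi hxj hxp hxq).elim
      obtain ⟨k1, hbjk1, hk1i, hk1j⟩ := hk1
      obtain ⟨-, -, xk1, hxk1, -⟩ := hbadM hbjk1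
      -- find k2 with Bad i k2, k2 ∉ {i, j}
      have hk2 : ∃ k2, Bad i k2 ∧ k2 ≠ i ∧ k2 ≠ j := by
        by_cases hri : r = i
        · exact ⟨s, hri ▸ hbrs, fun h => hrs' (hri.trans h.symm), hsj⟩
        · by_cases hsi : s = i
          · exact ⟨r, hbsymm (hsi ▸ hbrs), fun h => hrs' (h.trans hsi.symm), hrj⟩
          · exact (hC hij (fun h => hri h.symm) (fun h => hsi h.symm)
              (Ne.symm hrj) (Ne.symm hsj) hrs' hxi hxj hxr hxs).elim
      obtain ⟨k2, hbik2, hk2i, hk2j⟩ := hk2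
      obtain ⟨-, -, xk2, hxk2, -⟩ := hbadM hbik2
      have hkk : k1 = k2 := by
        by_contra hkk
        exact hC hij (Ne.symm hk1i) (Ne.symm hk2i) (Ne.symm hk1j) (Ne.symm hk2j) hkk
          hxi hxj hxk1 hxk2
      subst hkk
      right
      refine ⟨i, j, k1, B, hij, Ne.symm hk2i, Ne.symm hk1j, hbij.1, hbik2.1, hbjk1.1,
        hne, hconnG, hdisj, ?_, hw, ?_⟩
      · intro p' q' hpq'
        by_cases hg : ∃ u ∈ B p', ∃ v ∈ B q', G.Adj u v
        · exact Or.inr hg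
        left
        obtain ⟨u', hu', v', hv', -⟩ := hbadM ⟨hpq', hg⟩
        constructor
        · by_contra hp'
          simp only [Set.mem_insert_iff, Set.mem_singleton_iff, not_or] at hp'
          exact hC hp'.1 hp'.2.1 hp'.2.2 hij (Ne.symm hk2i) (Ne.symm hk1j)
            hu' hxi hxj hxk1
        · by_contra hq'
          simp only [Set.mem_insert_iff, Set.mem_singleton_iff, not_or] at hq'
          exact hC hq'.1 hq'.2.1 hq'.2.2 hij (Ne.symm hk2i) (Ne.symm hk1j)
            hv' hxi hxj hxk1
      · rintro t (rfl | rfl | rfl)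
        · exact ⟨xi, hxi.1, hxi.2⟩
        · exact ⟨xj, hxj.1, hxj.2⟩
        · exact ⟨xk1, hxk1.1, hxk1.2⟩
    · -- no bad pairs at all
      left
      push_neg at hbad
      refine ⟨B, hne, hconnG, hdisj, ?_⟩
      intro p q hpq
      by_contra hg
      exact hbad p q ⟨hpq, hg⟩
end Key
section PlanarTw

variable {V : Type*}

lemma isPlanar_Tw [Fintype V] (G : SimpleGraph V) (w : V)
    (h3 : (G.neighborSet w).ncard ≤ 3) (hG : IsPlanar G) : IsPlanar (Tw G w) := by
  classical
  have hK5deg : ∀ t : Fin 5, ∃ s, (completeGraph (Fin 5)).Adj t s := by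
    intro t
    by_cases h : t = 0
    · refine ⟨1, ?_⟩
      subst h
      simp [completeGraph]
    · exact ⟨0, by simpa [completeGraph] using h⟩
  have hK33deg : ∀ t : Fin 3 ⊕ Fin 3, ∃ s, (completeBipartiteGraph (Fin 3) (Fin 3)).Adj t s := by
    rintro (a | a)
    · exact ⟨Sum.inr a, Or.inl ⟨rfl, rfl⟩⟩
    · exact ⟨Sum.inl a, Or.inr ⟨rfl, rfl⟩⟩
  constructor
  · -- no K5 minor
    intro hm
    rcases key (completeGraph (Fin 5)) G w h3 hK5deg hm with h | h
    · exact hG.1 h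
    obtain ⟨i, j, k, B, hij, hik, hjk, -, -, -, hBne, hBconn, hBdisj, hreal, hwB, hstar⟩ := h
    -- build a K33 minor of G
    apply hG.2
    have hcard3 : ({i, j, k} : Finset (Fin 5)).card = 3 :=
      Finset.card_eq_three.mpr ⟨i, j, k, hij, hik, hjk, rfl⟩
    have hccard : (({i, j, k} : Finset (Fin 5))ᶜ).card = 2 := by
      rw [Finset.card_compl, hcard3]
      rfl
    obtain ⟨l, m, hlm, hclm⟩ := Finset.card_eq_two.mp hccard
    have hlmem : l ∉ ({i, j, k} : Finset (Fin 5)) := by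
      have : l ∈ (({i, j, k} : Finset (Fin 5))ᶜ) := by rw [hclm]; simp
      simpa using this
    have hmmem : m ∉ ({i, j, k} : Finset (Fin 5)) := by
      have : m ∈ (({i, j, k} : Finset (Fin 5))ᶜ) := by rw [hclm]; simp
      simpa using this
    simp only [Finset.mem_insert, Finset.mem_singleton, not_or] at hlmem hmmem
    obtain ⟨hli, hlj, hlk⟩ := hlmem
    obtain ⟨hmi, hmj, hmk⟩ := hmmem
    -- realizers for pairs not inside the triangle
    have hrealize : ∀ p q : Fin 5, p ≠ q → (q = l ∨ q = m) →
        ∃ u ∈ B p, ∃ v ∈ B q, G.Adj u v := by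
      intro p q hpq hq
      refine ((hreal (show (completeGraph (Fin 5)).Adj p q from hpq)).resolve_left ?_)
      rintro ⟨-, hq'⟩
      simp only [Set.mem_insert_iff, Set.mem_singleton_iff] at hq'
      rcases hq with rfl | rfl
      · rcases hq' with rfl | rfl | rfl
        · exact hli rfl
        · exact hlj rfl
        · exact hlk rfl
      · rcases hq' with rfl | rfl | rfl
        · exact hmi rfl
        · exact hmj rfl
        · exact hmk rfl
    have hstar' : ∀ t ∈ ({i, j, k} : Set (Fin 5)), ∃ x ∈ B t, G.Adj w x := hstar
    -- the branch function
    set CL : Fin 3 → Set V := fun a => if a = 0 then B i else if a = 1 then B j else B k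
      with hCL
    set CR : Fin 3 → Set V := fun a => if a = 0 then B l else if a = 1 then B m else {w}
      with hCR
    have hCLcases : ∀ a : Fin 3, CL a = B i ∨ CL a = B j ∨ CL a = B k := by
      intro a; fin_cases a <;> simp [hCL]
    have hCRcases : ∀ a : Fin 3, CR a = B l ∨ CR a = B m ∨ CR a = {w} := by
      intro a; fin_cases a <;> simp [hCR]
    have hcross : ∀ a b : Fin 3, ∃ u ∈ CL a, ∃ v ∈ CR b, G.Adj u v := by
      intro a b
      have hLmem : ∃ t ∈ ({i, j, k} : Set (Fin 5)), CL a = B t := by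
        rcases hCLcases a with h | h | h
        · exact ⟨i, by simp, h⟩
        · exact ⟨j, by simp, h⟩
        · exact ⟨k, by simp, h⟩
      obtain ⟨t, htmem, hteq⟩ := hLmem
      have htne : t ≠ l ∧ t ≠ m := by
        rcases htmem with rfl | rfl | rfl
        · exact ⟨fun h => hli h.symm, fun h => hmi h.symm⟩
        · exact ⟨fun h => hlj h.symm, fun h => hmj h.symm⟩
        · exact ⟨fun h => hlk h.symm, fun h => hmk h.symm⟩
      rcases hCRcases b with h | h | h
      · rw [hteq, h]; exact hrealize t l htne.1 (Or.inl rfl)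
      · rw [hteq, h]; exact hrealize t m htne.2 (Or.inr rfl)
      · rw [hteq, h]
        obtain ⟨x, hxB, hwx⟩ := hstar' t htmem
        exact ⟨x, hxB, w, rfl, hwx.symm⟩
    refine ⟨Sum.elim CL CR, ?_, ?_, ?_, ?_⟩
    · rintro (a | a)
      · show (CL a).Nonempty
        rcases hCLcases a with h | h | h <;> rw [h] <;> exact hBne _
      · show (CR a).Nonempty
        rcases hCRcases a with h | h | h <;> rw [h]
        · exact hBne _
        · exact hBne _
        · exact Set.singleton_nonempty _
    · rintro (a | a)
      · show (G.induce (CL a)).Connected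
        rcases hCLcases a with h | h | h <;> rw [h] <;> exact hBconn _
      · show (G.induce (CR a)).Connected
        rcases hCRcases a with h | h | h <;> rw [h]
        · exact hBconn _
        · exact hBconn _
        · exact singleton_induce_connected G w
    · -- pairwise disjoint
      have hPD : ∀ x y : Fin 5, x ≠ y → Disjoint (B x) (B y) := fun _ _ h => hBdisj h
      have hDW : ∀ x : Fin 5, Disjoint (B x) ({w} : Set V) :=
        fun x => Set.disjoint_singleton_right.mpr (hwB x)
      have hWD : ∀ x : Fin 5, Disjoint ({w} : Set V) (B x) :=
        fun x => (hDW x).symm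
      rintro (a | a) (b | b) hab <;>
        simp only [Sum.elim_inl, Sum.elim_inr, ne_eq, Sum.inl.injEq, Sum.inr.injEq] <;>
        fin_cases a <;> fin_cases b <;>
        simp only [hCL, hCR] <;>
        norm_num <;>
        first
          | exact absurd rfl hab
          | exact hPD _ _ hij | exact hPD _ _ hij.symm
          | exact hPD _ _ hik | exact hPD _ _ hik.symm
          | exact hPD _ _ hjk | exact hPD _ _ hjk.symm
          | exact hPD _ _ hli | exact hPD _ _ (Ne.symm hli)
          | exact hPD _ _ hlj | exact hPD _ _ (Ne.symm hlj)
          | exact hPD _ _ hlk | exact hPD _ _ (Ne.symm hlk)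
          | exact hPD _ _ hmi | exact hPD _ _ (Ne.symm hmi)
          | exact hPD _ _ hmj | exact hPD _ _ (Ne.symm hmj)
          | exact hPD _ _ hmk | exact hPD _ _ (Ne.symm hmk)
          | exact hPD _ _ hlm | exact hPD _ _ hlm.symm
          | exact hDW _ | exact hWD _ | exact hwB _
    · rintro (a | a) (b | b) hadj
      · exact absurd hadj (by simp [completeBipartiteGraph])
      · obtain ⟨u, hu, v, hv, huv⟩ := hcross a b
        exact ⟨u, hu, v, hv, huv⟩
      · obtain ⟨u, hu, v, hv, huv⟩ := hcross b a
        exact ⟨v, hv, u, hu, huv.symm⟩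
      · exact absurd hadj (by simp [completeBipartiteGraph])
  · -- no K33 minor
    intro hm
    rcases key (completeBipartiteGraph (Fin 3) (Fin 3)) G w h3 hK33deg hm with h | h
    · exact hG.2 h
    obtain ⟨i, j, k, -, -, -, -, hij, hik, hjk, -⟩ := h
    -- a bipartite graph has no triangle
    rcases i with a | a <;> rcases j with b | b <;> rcases k with c | c <;>
      simp [completeBipartiteGraph] at hij hik hjk

end PlanarTw
section Assemble

variable {V : Type*}

lemma dist_two_mid {G : SimpleGraph V} {u v : V} (h : G.dist u v = 2) :
    u ≠ v ∧ ∃ m, G.Adj u m ∧ G.Adj m v := by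
  have h0 : G.dist u v ≠ 0 := by omega
  obtain ⟨p, hp⟩ := SimpleGraph.exists_walk_of_dist_ne_zero h0
  rw [h] at hp
  have h01 : G.Adj (p.getVert 0) (p.getVert 1) := p.adj_getVert_succ (by omega)
  have h12 : G.Adj (p.getVert 1) (p.getVert 2) := p.adj_getVert_succ (by omega)
  refine ⟨(SimpleGraph.dist_ne_zero_iff_ne_and_reachable.mp h0).1, p.getVert 1, ?_, ?_⟩
  · rwa [p.getVert_zero] at h01
  · have h2 : p.getVert 2 = v := by
      rw [← hp]
      exact p.getVert_length
    rwa [h2] at h12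

theorem exactSquare_induce_indepSet_planar' {V : Type*} [Fintype V]
    (G : SimpleGraph V) (hplanar : IsPlanar G)
    (hdeg : ∀ v : V, (G.neighborSet v).ncard ≤ 3)
    (I : Set V) (hI : ∀ u ∈ I, ∀ v ∈ I, ¬ G.Adj u v) :
    IsPlanar ((exactSquare G).induce I) := by
  classical
  -- the bipartite-ish restriction of G : only edges meeting I
  set G0 : SimpleGraph V :=
    { Adj := fun u v => G.Adj u v ∧ (u ∈ I ∨ v ∈ I),
      symm := by constructor; rintro u v ⟨h1, h2⟩; exact ⟨h1.symm, h2.symm⟩,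
      loopless := by constructor; rintro v ⟨h1, -⟩; exact G.loopless.irrefl v h1 } with hG0
  have hG0le : G0 ≤ G := fun {u v} h => h.1
  have main : ∀ S : Finset V, ↑S ⊆ Iᶜ →
      ∃ G' : SimpleGraph V, IsPlanar G' ∧
        (∀ m, m ∉ I → ∀ m', m' ∉ I → ¬ G'.Adj m m') ∧
        (∀ m ∈ S, ∀ v, ¬ G'.Adj m v) ∧
        (∀ m, m ∉ I → G'.neighborSet m ⊆ G.neighborSet m) ∧
        (∀ u ∈ I, ∀ v ∈ I, u ≠ v → (∃ x, x ∉ I ∧ G.Adj u x ∧ G.Adj v x) →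
          (G'.Adj u v ∨ ∃ x, x ∉ I ∧ x ∉ S ∧ G'.Adj x u ∧ G'.Adj x v)) := by
    intro S
    induction S using Finset.induction_on with
    | empty =>
      intro _
      refine ⟨G0, isPlanar_anti hG0le hplanar, ?_, ?_, ?_, ?_⟩
      · rintro m hm m' hm' ⟨-, h | h⟩
        · exact hm h
        · exact hm' h
      · intro m hm
        exact absurd hm (Finset.notMem_empty m)
      · rintro m hm x ⟨h1, -⟩
        exact h1
      · intro u hu v hv huv ⟨x, hx, hux, hvx⟩
        exact Or.inr ⟨x, hx, Finset.notMem_empty x, ⟨hux.symm, Or.inr hu⟩, ⟨hvx.symm, Or.inr hv⟩⟩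
    | @insert a S haS ih =>
      intro hsub
      have haI : a ∉ I := by
        have : a ∈ (Iᶜ : Set V) := hsub (by simp)
        simpa using this
      have hS : ↑S ⊆ (Iᶜ : Set V) := by
        intro x hx
        exact hsub (by simp [hx])
      obtain ⟨G', hpl, hind, hiso, hnbr, hcov⟩ := ih hS
      refine ⟨Tw G' a, ?_, ?_, ?_, ?_, ?_⟩
      · refine isPlanar_Tw G' a ?_ hpl
        calc (G'.neighborSet a).ncard ≤ (G.neighborSet a).ncard :=
              Set.ncard_le_ncard (hnbr a haI) (Set.toFinite _)
          _ ≤ 3 := hdeg a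
      · rintro m hm m' hm' ⟨h1, h2, h3, h4 | ⟨h4, h5⟩⟩
        · exact hind m hm m' hm' h4
        · exact hind a haI m hm h4
      · intro m hm v
        rcases Finset.mem_insert.mp hm with rfl | hm'
        · rintro ⟨-, h2, -, -⟩
          exact h2 rfl
        · rintro ⟨-, -, -, h4 | ⟨h4, h5⟩⟩
          · exact hiso m hm' v h4
          · exact hiso m hm' a h4.symm
      · rintro m hm x ⟨h1, h2, h3, h4 | ⟨h4, h5⟩⟩
        · exact hnbr m hm h4
        · exact absurd h4 (hind a haI m hm)
      · intro u hu v hv huv hmid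
        rcases hcov u hu v hv huv hmid with h | ⟨x, hxI, hxS, hxu, hxv⟩
        · left
          exact ⟨huv, fun h' => haI (h' ▸ hu), fun h' => haI (h' ▸ hv), Or.inl h⟩
        · by_cases hxa : x = a
          · subst hxa
            left
            exact ⟨huv, fun h' => haI (h' ▸ hu), fun h' => haI (h' ▸ hv),
              Or.inr ⟨hxu, hxv⟩⟩
          · right
            refine ⟨x, hxI, by simp [hxa, hxS], ?_, ?_⟩
            · exact ⟨hxu.ne, hxa, fun h' => haI (h' ▸ hu), Or.inl hxu⟩
            · exact ⟨hxv.ne, hxa, fun h' => haI (h' ▸ hv), Or.inl hxv⟩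
  obtain ⟨Gf, hplf, hindf, hisof, hnbrf, hcovf⟩ :=
    main (Set.Finite.toFinset (Set.toFinite (Iᶜ : Set V)))
      (fun x hx => (Set.Finite.mem_toFinset _).mp (Finset.mem_coe.mp hx))
  have hadj : ∀ a b : ↥I, ((exactSquare G).induce I).Adj a b → Gf.Adj ↑a ↑b := by
    intro a b hab
    have hdist : G.dist ↑a ↑b = 2 := hab
    obtain ⟨hne, m, ham, hmb⟩ := dist_two_mid hdist
    have hmI : m ∉ I := fun hm => hI ↑a a.2 m hm ham
    rcases hcovf ↑a a.2 ↑b b.2 hne ⟨m, hmI, ham, hmb.symm⟩ with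
      h | ⟨x, hxI, hxS, -, -⟩
    · exact h
    · exact absurd ((Set.Finite.mem_toFinset (Set.toFinite (Iᶜ : Set V))).mpr hxI) hxS
  exact ⟨fun hm => hplf.1 (hasMinor_of_induce hadj hm),
    fun hm => hplf.2 (hasMinor_of_induce hadj hm)⟩

end Assemble

/-- If `G` is a subcubic planar graph and `I` is an independent set of `G`,
then the subgraph of the exact square of `G` induced by `I` is planar. -/
theorem exactSquare_induce_indepSet_planar {V : Type*} [Fintype V]
    (G : SimpleGraph V) (hplanar : IsPlanar G)
    (hdeg : ∀ v : V, (G.neighborSet v).ncard ≤ 3)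
    (I : Set V) (hI : ∀ u ∈ I, ∀ v ∈ I, ¬ G.Adj u v) :
    IsPlanar ((exactSquare G).induce I) := by
  exact exactSquare_induce_indepSet_planar' G hplanar hdeg I hI
end

section
/- There exists a bipartite subcubic K_4-minor-free graph G of girth 6 with ω^{[#2]}(G) = 4. In particular, the graph K_{2,3}-subdivided (two vertices joined by three internally disjoint paths of length 3) has an exact square containing K_4. -/
namespace ExactSqWitness

open SimpleGraph

/-- Edge list of the witness graph: vertex `0`, vertex `1`, and three paths
`0 - aᵢ - bᵢ - 1` with `aᵢ ∈ {2,3,4}`, `bᵢ ∈ {5,6,7}`. -/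
def edges : List (Fin 8 × Fin 8) :=
  [(0,2),(0,3),(0,4),(2,5),(3,6),(4,7),(5,1),(6,1),(7,1)]

def G8 : SimpleGraph (Fin 8) := SimpleGraph.fromRel (fun u v => (u, v) ∈ edges)

instance : DecidableRel G8.Adj := fun u v =>
  decidable_of_iff (u ≠ v ∧ ((u, v) ∈ edges ∨ (v, u) ∈ edges)) Iff.rfl

/-- The exact square of `G8`, described explicitly: two disjoint copies of `K₄`,
on `{0,5,6,7}` and on `{1,2,3,4}`. -/
def sqEdges : List (Fin 8 × Fin 8) :=
  [(0,5),(0,6),(0,7),(5,6),(5,7),(6,7),(1,2),(1,3),(1,4),(2,3),(2,4),(3,4)]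

def H8 : SimpleGraph (Fin 8) := SimpleGraph.fromRel (fun u v => (u, v) ∈ sqEdges)

instance : DecidableRel H8.Adj := fun u v =>
  decidable_of_iff (u ≠ v ∧ ((u, v) ∈ sqEdges ∨ (v, u) ∈ sqEdges)) Iff.rfl

lemma dist_eq_two_iff {V : Type*} (G : SimpleGraph V) (u v : V) :
    G.dist u v = 2 ↔ u ≠ v ∧ ¬ G.Adj u v ∧ ∃ w, G.Adj u w ∧ G.Adj w v := by
  constructor
  · intro h
    have hne : u ≠ v := by
      rintro rfl; simp [SimpleGraph.dist_self] at h
    have hadj : ¬ G.Adj u v := by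
      intro ha
      have h1 := SimpleGraph.dist_eq_one_iff_adj.2 ha
      rw [h] at h1; exact absurd h1 (by norm_num)
    have h0 : G.dist u v ≠ 0 := by rw [h]; omega
    obtain ⟨p, hp⟩ := SimpleGraph.exists_walk_of_dist_ne_zero h0
    rw [h] at hp
    refine ⟨hne, hadj, ?_⟩
    cases p with
    | nil => simp at hp
    | cons h1 q =>
      cases q with
      | nil => simp at hp
      | cons h2 r =>
        cases r with
        | nil => exact ⟨_, h1, h2⟩
        | cons h3 s => simp [SimpleGraph.Walk.length_cons] at hp
  · rintro ⟨hne, hna, w, h1, h2⟩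
    have hle : G.dist u v ≤ 2 := by
      simpa using SimpleGraph.dist_le (SimpleGraph.Walk.cons h1 (SimpleGraph.Walk.cons h2 SimpleGraph.Walk.nil))
    have h0 : 0 < G.dist u v :=
      SimpleGraph.Reachable.pos_dist_of_ne
        ⟨SimpleGraph.Walk.cons h1 (SimpleGraph.Walk.cons h2 SimpleGraph.Walk.nil)⟩ hne
    have h1' : G.dist u v ≠ 1 := fun h => hna (SimpleGraph.dist_eq_one_iff_adj.1 h)
    omega

lemma exactSquare_eq : exactSquare G8 = H8 := by
  ext u v
  show G8.dist u v = 2 ↔ H8.Adj u v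
  rw [dist_eq_two_iff]
  revert u v
  decide

/-- The 2-coloring. -/
def c2 : Fin 8 → Fin 2 := ![0, 1, 1, 1, 1, 0, 0, 0]

lemma c2_valid : ∀ v w : Fin 8, G8.Adj v w → c2 v ≠ c2 w := by decide

/-- Adjacent vertices avoiding `0` and `1` lie in a common branch (residue mod 3). -/
lemma adj_br : ∀ x y : Fin 8, G8.Adj x y → x ≠ 0 → x ≠ 1 → y ≠ 0 → y ≠ 1 →
    x.val % 3 = y.val % 3 := by decide

/-- Key local lemma for excluding a `K₄` minor. -/
lemma key : ∀ p p' r q q' : Fin 8,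
    p ≠ 0 → p ≠ 1 → p' ≠ 0 → p' ≠ 1 → r ≠ 0 → r ≠ 1 →
    p.val % 3 = r.val % 3 → p'.val % 3 = r.val % 3 → p ≠ r → p' ≠ r →
    G8.Adj p q → G8.Adj p' q' → q = r ∨ q' = r ∨ q = q' := by decide

lemma walk_br {S : Set (Fin 8)} (h0 : (0 : Fin 8) ∉ S) (h1 : (1 : Fin 8) ∉ S)
    {a b : S} (w : (G8.induce S).Walk a b) :
    (a : Fin 8).val % 3 = (b : Fin 8).val % 3 := by
  induction w with
  | nil => rfl
  | @cons x y z h p ih =>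
    have hadj : G8.Adj (x : Fin 8) (y : Fin 8) := h
    have hx0 : (x : Fin 8) ≠ 0 := fun he => h0 (he ▸ x.2)
    have hx1 : (x : Fin 8) ≠ 1 := fun he => h1 (he ▸ x.2)
    have hy0 : (y : Fin 8) ≠ 0 := fun he => h0 (he ▸ y.2)
    have hy1 : (y : Fin 8) ≠ 1 := fun he => h1 (he ▸ y.2)
    exact (adj_br _ _ hadj hx0 hx1 hy0 hy1).trans ih

lemma no_K4_minor : ¬ HasMinor G8 (completeGraph (Fin 4)) := by
  classical
  rintro ⟨B, hne, hconn, hdisj, hedge⟩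
  -- at most one branch set contains 0, at most one contains 1
  have hmem : ∀ (z : Fin 8) (i j : Fin 4), z ∈ B i → z ∈ B j → i = j := by
    intro z i j hi hj
    by_contra hij
    exact Set.disjoint_left.mp (hdisj hij) hi hj
  -- find two indices avoiding 0 and 1
  let T0 : Finset (Fin 4) := Finset.univ.filter (fun i => (0 : Fin 8) ∈ B i)
  let T1 : Finset (Fin 4) := Finset.univ.filter (fun i => (1 : Fin 8) ∈ B i)
  let S : Finset (Fin 4) := Finset.univ.filter (fun i => (0 : Fin 8) ∉ B i ∧ (1 : Fin 8) ∉ B i)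
  have hT0 : T0.card ≤ 1 := Finset.card_le_one.2 (by
    intro i hi j hj
    exact hmem 0 i j (Finset.mem_filter.1 hi).2 (Finset.mem_filter.1 hj).2)
  have hT1 : T1.card ≤ 1 := Finset.card_le_one.2 (by
    intro i hi j hj
    exact hmem 1 i j (Finset.mem_filter.1 hi).2 (Finset.mem_filter.1 hj).2)
  have hsub : (Finset.univ : Finset (Fin 4)) ⊆ S ∪ T0 ∪ T1 := by
    intro i _
    by_cases h0 : (0 : Fin 8) ∈ B i
    · exact Finset.mem_union_left _ (Finset.mem_union_right _ (by simp [T0, h0]))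
    by_cases h1 : (1 : Fin 8) ∈ B i
    · exact Finset.mem_union_right _ (by simp [T1, h1])
    · exact Finset.mem_union_left _ (Finset.mem_union_left _ (by simp [S, h0, h1]))
  have hScard : 2 ≤ S.card := by
    have h4 : (Finset.univ : Finset (Fin 4)).card = 4 := by simp
    have := Finset.card_le_card hsub
    have hle := Finset.card_union_le (S ∪ T0) T1
    have hle2 := Finset.card_union_le S T0
    omega
  obtain ⟨i, hiS, j, hjS, hij⟩ := Finset.one_lt_card.1 hScard
  obtain ⟨hi0, hi1⟩ := (Finset.mem_filter.1 hiS).2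
  obtain ⟨hj0, hj1⟩ := (Finset.mem_filter.1 hjS).2
  -- all elements of B i share the same residue mod 3, similarly B j
  have hbr : ∀ (k : Fin 4), (0:Fin 8) ∉ B k → (1:Fin 8) ∉ B k →
      ∀ x ∈ B k, ∀ y ∈ B k, (x : Fin 8).val % 3 = y.val % 3 := by
    intro k h0 h1 x hx y hy
    obtain ⟨w⟩ := (hconn k).preconnected ⟨x, hx⟩ ⟨y, hy⟩
    exact walk_br h0 h1 w
  -- edge between B i and B j
  have hKadj : ∀ {a b : Fin 4}, a ≠ b → (completeGraph (Fin 4)).Adj a b := fun h => h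
  obtain ⟨p, hp, r, hr, hpr⟩ := hedge (hKadj hij)
  have hp0 : p ≠ 0 := fun he => hi0 (he ▸ hp)
  have hp1 : p ≠ 1 := fun he => hi1 (he ▸ hp)
  have hr0 : r ≠ 0 := fun he => hj0 (he ▸ hr)
  have hr1 : r ≠ 1 := fun he => hj1 (he ▸ hr)
  have hprbr : p.val % 3 = r.val % 3 := adj_br _ _ hpr hp0 hp1 hr0 hr1
  -- the other two indices
  have exists_other : ∀ a b : Fin 4, a ≠ b →
      ∃ k l : Fin 4, k ≠ l ∧ k ≠ a ∧ k ≠ b ∧ l ≠ a ∧ l ≠ b := by decide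
  obtain ⟨k, l, hkl, hki, hkj, hli, hlj⟩ := exists_other i j hij
  obtain ⟨p1, hp1', q, hq, h1adj⟩ := hedge (hKadj hki.symm)
  obtain ⟨p2, hp2', q', hq', h2adj⟩ := hedge (hKadj hli.symm)
  have hp10 : p1 ≠ 0 := fun he => hi0 (he ▸ hp1')
  have hp11 : p1 ≠ 1 := fun he => hi1 (he ▸ hp1')
  have hp20 : p2 ≠ 0 := fun he => hi0 (he ▸ hp2')
  have hp21 : p2 ≠ 1 := fun he => hi1 (he ▸ hp2')
  have hb1 : p1.val % 3 = r.val % 3 := (hbr i hi0 hi1 p1 hp1' p hp).trans hprbr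
  have hb2 : p2.val % 3 = r.val % 3 := (hbr i hi0 hi1 p2 hp2' p hp).trans hprbr
  have hp1r : p1 ≠ r := fun he => Set.disjoint_left.mp (hdisj hij) hp1' (he ▸ hr)
  have hp2r : p2 ≠ r := fun he => Set.disjoint_left.mp (hdisj hij) hp2' (he ▸ hr)
  rcases key p1 p2 r q q' hp10 hp11 hp20 hp21 hr0 hr1 hb1 hb2 hp1r hp2r h1adj h2adj with
    h | h | h
  · exact Set.disjoint_left.mp (hdisj hkj) hq (h ▸ hr)
  · exact Set.disjoint_left.mp (hdisj hlj) hq' (h ▸ hr)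
  · exact Set.disjoint_left.mp (hdisj hkl) hq (h ▸ hq')

/-- A parity function: the 2-coloring, valued in `ZMod 2`. -/
def par : Fin 8 → ZMod 2 := ![0, 1, 1, 1, 1, 0, 0, 0]

lemma adj_par : ∀ x y : Fin 8, G8.Adj x y → par y = par x + 1 := by decide

lemma walk_par {a b : Fin 8} (w : G8.Walk a b) : par b = par a + w.length := by
  induction w with
  | nil => simp
  | @cons x y z h p ih =>
    rw [ih, adj_par x y h]
    push_cast [SimpleGraph.Walk.length_cons]
    ring

lemma cycle_even {a : Fin 8} {w : G8.Walk a a} : 2 ∣ w.length := by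
  have := walk_par w
  have h : ((w.length : ℕ) : ZMod 2) = 0 := by
    have := left_eq_add.mp this
    exact this
  exact (ZMod.natCast_eq_zero_iff _ _).1 h

lemma no_four_cycle : ∀ a b c d : Fin 8, a ≠ c → b ≠ d →
    ¬ (G8.Adj a b ∧ G8.Adj b c ∧ G8.Adj c d ∧ G8.Adj d a) := by decide

/-- The hexagon 0-2-5-1-6-3-0. -/
def hex : G8.Walk 0 0 :=
  .cons (show G8.Adj 0 2 by decide) (.cons (show G8.Adj 2 5 by decide)
    (.cons (show G8.Adj 5 1 by decide) (.cons (show G8.Adj 1 6 by decide)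
      (.cons (show G8.Adj 6 3 by decide) (.cons (show G8.Adj 3 0 by decide) .nil)))))

lemma hex_isCycle : hex.IsCycle := by
  rw [SimpleGraph.Walk.isCycle_def, SimpleGraph.Walk.isTrail_def]
  refine ⟨?_, by simp [hex], ?_⟩
  · simp [hex, SimpleGraph.Walk.edges_cons]
  · simp [hex, SimpleGraph.Walk.support_cons]

lemma egirth_eq : G8.egirth = 6 := by
  apply le_antisymm
  · have h : G8.egirth ≤ (hex.length : ℕ∞) := by
      rw [SimpleGraph.egirth]
      exact iInf_le_of_le 0 (iInf_le_of_le hex (iInf_le _ hex_isCycle))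
    have hl : hex.length = 6 := rfl
    rw [hl] at h
    exact_mod_cast h
  · rw [SimpleGraph.le_egirth]
    intro a w hw
    have h3 : 3 ≤ w.length := hw.three_le_length
    have heven : 2 ∣ w.length := cycle_even
    have h4 : w.length ≠ 4 := by
      intro hlen
      cases w with
      | nil => simp at hlen
      | cons h1 p =>
        cases p with
        | nil => simp at hlen
        | cons h2 p =>
          cases p with
          | nil => simp at hlen
          | cons h3' p =>
            cases p with
            | nil => simp at hlen
            | @cons _ e _ h4' p =>
              cases p with
              | nil =>
                -- vertices a, b, c, d, back to a
                have hnd := hw.2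
                simp [SimpleGraph.Walk.support_cons, List.nodup_cons] at hnd
                obtain ⟨⟨hbc, hbd, hba⟩, ⟨hcd, hca⟩, hda⟩ := hnd
                exact no_four_cycle _ _ _ _ (Ne.symm hca) hbd ⟨h1, h2, h3', h4'⟩
              | cons h5 p => simp [SimpleGraph.Walk.length_cons] at hlen
    have : 6 ≤ w.length := by omega
    exact_mod_cast this

lemma degree_le : ∀ v : Fin 8, (G8.neighborSet v).ncard ≤ 3 := by
  intro v
  rw [Set.ncard_eq_toFinset_card']
  have : (G8.neighborSet v).toFinset = G8.neighborFinset v := rfl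
  rw [this]
  revert v
  decide

end ExactSqWitness

set_option maxRecDepth 4000 in
open ExactSqWitness in
/-- There exists a bipartite subcubic `K₄`-minor-free graph of girth `6` whose
exact square has clique number exactly `4`. -/
theorem exists_bipartite_subcubic_K4free_girth6_omega4 :
    ∃ (n : ℕ) (G : SimpleGraph (Fin n)),
      G.Colorable 2 ∧
      (∀ v, (G.neighborSet v).ncard ≤ 3) ∧
      ¬ HasMinor G (SimpleGraph.completeGraph (Fin 4)) ∧
      G.egirth = 6 ∧
      (∃ s : Finset (Fin n), (exactSquare G).IsNClique 4 s) ∧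
      (exactSquare G).CliqueFree 5 := by
  refine ⟨8, G8, ⟨SimpleGraph.Coloring.mk c2 (fun {v w} h => c2_valid v w h)⟩,
    degree_le, no_K4_minor, egirth_eq, ?_, ?_⟩
  · refine ⟨{0, 5, 6, 7}, ?_⟩
    rw [exactSquare_eq]
    decide
  · rw [exactSquare_eq]
    show ∀ t, ¬ H8.IsNClique 5 t
    decide
end

section
/- In any proper 3-coloring of the exact square of the graph consisting of a central 5-cycle x y u₄ u₃ u₂ surrounded by three consecutive pentagons (as in Figure 6: 5-cycles u₁ u₂ x v₂ v₁, v₂ v₃ v₄ y x (with the central pentagon), and v₄ v₅ u₅ u₄ y), the vertices x and y receive distinct colors. -/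
/-- The graph of Figure 6 of the paper: a central pentagon
`x y u₄ u₃ u₂` surrounded by three consecutive pentagons
`u₁ u₂ x v₂ v₁`, `x v₂ v₃ v₄ y` and `y v₄ v₅ u₅ u₄`.
Vertex numbering: `x = 0`, `y = 1`, `u₂ = 2`, `u₃ = 3`, `u₄ = 4`,
`u₁ = 5`, `u₅ = 6`, `v₁ = 7`, `v₂ = 8`, `v₃ = 9`, `v₄ = 10`, `v₅ = 11`. -/
def figure6Graph : SimpleGraph (Fin 12) :=
  SimpleGraph.fromRel (fun u v => (u.val, v.val) ∈
    [(3,2), (2,0), (0,1), (1,4), (4,3),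
     (0,8), (8,9), (9,10), (10,1),
     (2,5), (5,7), (7,8),
     (4,6), (6,11), (11,10)])

lemma dist_eq_two_of {V : Type*} {G : SimpleGraph V} {u w v : V}
    (h1 : G.Adj u w) (h2 : G.Adj w v) (hne : u ≠ v) (hna : ¬ G.Adj u v) :
    G.dist u v = 2 := by
  have hle : G.dist u v ≤ 2 := by
    have := G.dist_le (SimpleGraph.Walk.cons h1 (SimpleGraph.Walk.cons h2 SimpleGraph.Walk.nil))
    simpa using this
  have h0 : G.dist u v ≠ 0 := by
    rw [SimpleGraph.dist_ne_zero_iff_ne_and_reachable]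
    exact ⟨hne, ⟨SimpleGraph.Walk.cons h1 (SimpleGraph.Walk.cons h2 SimpleGraph.Walk.nil)⟩⟩
  have hone : G.dist u v ≠ 1 := fun h => hna (SimpleGraph.dist_eq_one_iff_adj.mp h)
  omega

/-- In any proper 3-coloring of the exact square of the graph of Figure 6, the
adjacent central vertices `x` and `y` receive distinct colors. -/
theorem figure6_x_y_distinct (φ : Fin 12 → Fin 3)
    (hφ : ∀ ⦃u v⦄, (exactSquare figure6Graph).Adj u v → φ u ≠ φ v) :
    φ 0 ≠ φ 1 := by
  have adj : ∀ a b : Fin 12, figure6Graph.Adj a b ↔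
      (a ≠ b ∧ ((a.val, b.val) ∈
        [(3,2), (2,0), (0,1), (1,4), (4,3),
         (0,8), (8,9), (9,10), (10,1),
         (2,5), (5,7), (7,8),
         (4,6), (6,11), (11,10)] ∨ (b.val, a.val) ∈
        [(3,2), (2,0), (0,1), (1,4), (4,3),
         (0,8), (8,9), (9,10), (10,1),
         (2,5), (5,7), (7,8),
         (4,6), (6,11), (11,10)])) := by
    intro a b
    simp [figure6Graph, SimpleGraph.fromRel_adj, and_comm]
  have key : ∀ a w b : Fin 12, figure6Graph.Adj a w → figure6Graph.Adj w b →
      a ≠ b → ¬ figure6Graph.Adj a b → φ a ≠ φ b := by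
    intro a w b h1 h2 hne hna
    exact hφ (dist_eq_two_of h1 h2 hne hna)
  have h05 : φ 0 ≠ φ 5 := key 0 2 5 (by rw [adj]; decide) (by rw [adj]; decide) (by decide) (by rw [adj]; decide)
  have h010 : φ 0 ≠ φ 10 := key 0 1 10 (by rw [adj]; decide) (by rw [adj]; decide) (by decide) (by rw [adj]; decide)
  have h13 : φ 1 ≠ φ 3 := key 1 4 3 (by rw [adj]; decide) (by rw [adj]; decide) (by decide) (by rw [adj]; decide)
  have h16 : φ 1 ≠ φ 6 := key 1 4 6 (by rw [adj]; decide) (by rw [adj]; decide) (by decide) (by rw [adj]; decide)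
  have h18 : φ 1 ≠ φ 8 := key 1 0 8 (by rw [adj]; decide) (by rw [adj]; decide) (by decide) (by rw [adj]; decide)
  have h35 : φ 3 ≠ φ 5 := key 3 2 5 (by rw [adj]; decide) (by rw [adj]; decide) (by decide) (by rw [adj]; decide)
  have h36 : φ 3 ≠ φ 6 := key 3 4 6 (by rw [adj]; decide) (by rw [adj]; decide) (by decide) (by rw [adj]; decide)
  have h58 : φ 5 ≠ φ 8 := key 5 7 8 (by rw [adj]; decide) (by rw [adj]; decide) (by decide) (by rw [adj]; decide)
  have h610 : φ 6 ≠ φ 10 := key 6 11 10 (by rw [adj]; decide) (by rw [adj]; decide) (by decide) (by rw [adj]; decide)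
  have h810 : φ 8 ≠ φ 10 := key 8 9 10 (by rw [adj]; decide) (by rw [adj]; decide) (by decide) (by rw [adj]; decide)
  have final : ∀ a b c d e f g : Fin 3,
      a ≠ e → a ≠ g → b ≠ c → b ≠ d → b ≠ f → c ≠ e → c ≠ d → e ≠ f → d ≠ g → f ≠ g →
      a ≠ b := by
    set_option maxRecDepth 10000 in set_option synthInstance.maxSize 1000 in decide
  exact final (φ 0) (φ 1) (φ 3) (φ 6) (φ 5) (φ 8) (φ 10)
    h05 h010 h13 h16 h18 h35 h36 h58 h610 h810
end

section
/- For every k ≥ 1, the k-drum fullerene graph is exact square 3-colorable; i.e., its exact square has chromatic number at most 3. -/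
/-- The `k`-drum fullerene graph, a `(6,0)`-nanotube: its vertices form
`2k + 2` concentric rings of six vertices. Ring `0` and ring `2k+1` are
hexagonal faces (the two caps `F`, `F'`); consecutive rings `j`, `j+1` are
joined by a perfect matching when `j` is even, and in a zigzag fashion
(vertex `i` of ring `j` joined to vertices `i` and `i+1` of ring `j+1`) when
`j` is odd. For `k = 1` this is the unique fullerene on 24 vertices. -/
def drum (k : ℕ) : SimpleGraph (Fin (2 * k + 2) × Fin 6) :=
  SimpleGraph.fromRel (fun a b =>
    -- hexagon edges on the two cap rings
    (a.1 = b.1 ∧ (a.1.val = 0 ∨ a.1.val = 2 * k + 1) ∧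
      b.2.val = (a.2.val + 1) % 6) ∨
    -- edges between consecutive rings
    (b.1.val = a.1.val + 1 ∧
      ((a.1.val % 2 = 0 ∧ b.2 = a.2) ∨
       (a.1.val % 2 = 1 ∧ (b.2 = a.2 ∨ b.2.val = (a.2.val + 1) % 6)))))

set_option maxHeartbeats 2000000 in
/-- The key combinatorial fact: the coloring `(j, i) ↦ (i + j / 2) % 3`
separates any two non-adjacent distinct vertices having a common neighbor. -/
lemma drum_color_key (k : ℕ) (u w v : Fin (2 * k + 2) × Fin 6)
    (huw : (drum k).Adj u w) (hwv : (drum k).Adj w v)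
    (huv : u ≠ v) (hnadj : ¬ (drum k).Adj u v) :
    (u.2.val + u.1.val / 2) % 3 ≠ (v.2.val + v.1.val / 2) % 3 := by
  have b1 := u.1.isLt
  have b2 := u.2.isLt
  have b3 := v.1.isLt
  have b4 := v.2.isLt
  have b5 := w.1.isLt
  have b6 := w.2.isLt
  simp only [drum, SimpleGraph.fromRel_adj, ne_eq, Prod.ext_iff, Fin.ext_iff,
    not_and, not_or, not_forall] at huw hwv huv hnadj
  obtain ⟨h1, h2⟩ := huw
  obtain ⟨h3, h4⟩ := hwv
  rcases h2 with (⟨e1, e2, e3⟩ | ⟨e1, (⟨e2, e3⟩ | ⟨e2, (e3 | e3)⟩)⟩) |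
    (⟨e1, e2, e3⟩ | ⟨e1, (⟨e2, e3⟩ | ⟨e2, (e3 | e3)⟩)⟩) <;>
  rcases h4 with (⟨f1, f2, f3⟩ | ⟨f1, (⟨f2, f3⟩ | ⟨f2, (f3 | f3)⟩)⟩) |
    (⟨f1, f2, f3⟩ | ⟨f1, (⟨f2, f3⟩ | ⟨f2, (f3 | f3)⟩)⟩) <;>
  omega

/-- For every `k ≥ 1`, the `k`-drum is exact square 3-colorable. -/
theorem drum_exactSquare_three_colorable (k : ℕ) (hk : 1 ≤ k) :
    (exactSquare (drum k)).Colorable 3 := by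
  refine ⟨SimpleGraph.Coloring.mk
    (fun p => ⟨(p.2.val + p.1.val / 2) % 3, Nat.mod_lt _ (by norm_num)⟩) ?_⟩
  intro u v hadj
  have hd : (drum k).dist u v = 2 := hadj
  have hne : u ≠ v := by
    intro h; subst h; simp [SimpleGraph.dist_self] at hd
  have hreach : (drum k).Reachable u v := by
    by_contra hr
    rw [SimpleGraph.dist_eq_zero_iff_eq_or_not_reachable.mpr (Or.inr hr)] at hd
    exact two_ne_zero hd.symm
  have hnadj : ¬ (drum k).Adj u v := by
    intro h
    rw [SimpleGraph.dist_eq_one_iff_adj.mpr h] at hd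
    omega
  obtain ⟨p, hp⟩ := hreach.exists_walk_length_eq_dist
  rw [hd] at hp
  match p, hp with
  | SimpleGraph.Walk.cons h1 (SimpleGraph.Walk.cons h2 SimpleGraph.Walk.nil), _ =>
    have := drum_color_key k u _ v h1 h2 hne hnadj
    exact fun h => this (by simpa using congrArg Fin.val h)
end
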